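/- Assume moreover q ≠ 1. For every natural number n, the following identities hold in A: eⁿ·h = (qⁿ·h − 2·(qⁿ − 1)/(q − 1))·eⁿ and fⁿ·h = (q^{−n}·h − 2·(q^{−n} − 1)/(q − 1))·fⁿ. -/
import Mathlib

lemma jz_aux {A : Type*} [Ring A] [Algebra ℂ A] (t s : ℂ) (ht : t ≠ 1) (x h : A)
    (hx : x * h = t • (h * x) + s • x) :
    ∀ n : ℕ, x ^ n * h = (t ^ n) • (h * x ^ n) + (s * (t ^ n - 1) / (t - 1)) • x ^ n := by
  intro n
  induction n with
  | zero => simp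
  | succ n ih =>
      have key : s * t ^ n + s * (t ^ n - 1) / (t - 1) = s * (t ^ (n + 1) - 1) / (t - 1) := by
        have h1 : t - 1 ≠ 0 := sub_ne_zero.mpr ht
        field_simp
        ring
      calc x ^ (n + 1) * h = x * (x ^ n * h) := by rw [pow_succ', mul_assoc]
        _ = x * ((t ^ n) • (h * x ^ n) + (s * (t ^ n - 1) / (t - 1)) • x ^ n) := by rw [ih]
        _ = (t ^ n) • ((x * h) * x ^ n) + (s * (t ^ n - 1) / (t - 1)) • (x * x ^ n) := by
              rw [mul_add, mul_smul_comm, mul_smul_comm, mul_assoc]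
        _ = (t ^ n) • ((t • (h * x) + s • x) * x ^ n)
              + (s * (t ^ n - 1) / (t - 1)) • (x * x ^ n) := by rw [hx]
        _ = (t ^ (n + 1)) • (h * x ^ (n + 1))
              + (s * (t ^ (n + 1) - 1) / (t - 1)) • x ^ (n + 1) := by
              rw [← key, add_smul, add_mul, smul_mul_assoc, smul_mul_assoc, smul_add,
                smul_smul, smul_smul, mul_assoc, ← pow_succ']
              module

/-- if `q ≠ 1`, then for every natural number `n`:
`eⁿ·h = (qⁿ·h − 2·(qⁿ − 1)/(q − 1))·eⁿ` and
`fⁿ·h = (q^{−n}·h − 2·(q^{−n} − 1)/(q − 1))·fⁿ` in `A`. -/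
theorem jz_powers_twisted_commutation_h {A : Type*} [Ring A] [Algebra ℂ A]
    (q : ℂ) (hq : q ≠ 0) (hq1 : q ≠ 1) (e f h : A)
    (rel1 : q • (h * e) - e * h = 2 * e)
    (rel2 : h * f - q • (f * h) = -(2 * f))
    (rel3 : e * f - q • (f * e) = h + ((1 - q) / 4) • h ^ 2) :
    ∀ n : ℕ,
      e ^ n * h
        = ((q ^ n) • h - algebraMap ℂ A (2 * (q ^ n - 1) / (q - 1))) * e ^ n ∧
      f ^ n * h
        = ((q ^ (-(n : ℤ))) • h
            - algebraMap ℂ A (2 * (q ^ (-(n : ℤ)) - 1) / (q - 1))) * f ^ n := by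
  have hq1' : q - 1 ≠ 0 := sub_ne_zero.mpr hq1
  have he : e * h = q • (h * e) + (-2 : ℂ) • e := by
    have h2 : (-2 : ℂ) • e = -(2 * e) := by rw [neg_smul, two_smul, two_mul]
    rw [h2, ← rel1]; abel
  have hf : f * h = (q⁻¹) • (h * f) + (2 * q⁻¹) • f := by
    have h2 : (2 : ℂ) • f = 2 * f := by rw [two_smul, two_mul]
    have key : q • (f * h) = h * f + (2 : ℂ) • f := by
      rw [h2, sub_eq_iff_eq_add.mp rel2]; abel
    calc f * h = q⁻¹ • (q • (f * h)) := by rw [smul_smul, inv_mul_cancel₀ hq, one_smul]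
      _ = q⁻¹ • (h * f + (2 : ℂ) • f) := by rw [key]
      _ = (q⁻¹) • (h * f) + (2 * q⁻¹) • f := by rw [smul_add, smul_smul]; module
  intro n
  constructor
  · have h1 := jz_aux q (-2) hq1 e h he n
    rw [h1, sub_mul, smul_mul_assoc,
      show algebraMap ℂ A (2 * (q ^ n - 1) / (q - 1)) * e ^ n
        = (2 * (q ^ n - 1) / (q - 1)) • e ^ n from (Algebra.smul_def _ _).symm]
    module
  · have hti : q⁻¹ ≠ 1 := by
      intro hcon
      apply hq1
      have := congrArg (fun z => z⁻¹) hcon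
      simpa using this
    have hti' : q⁻¹ - 1 ≠ 0 := sub_ne_zero.mpr hti
    have h1 := jz_aux q⁻¹ (2 * q⁻¹) hti f h hf n
    have hzp : q ^ (-(n : ℤ)) = (q⁻¹) ^ n := by
      rw [zpow_neg, ← inv_zpow, zpow_natCast]
    have hcoef : 2 * q⁻¹ * ((q⁻¹) ^ n - 1) / (q⁻¹ - 1)
        = -(2 * ((q⁻¹) ^ n - 1) / (q - 1)) := by
      rw [div_eq_iff hti', inv_pow]
      have hqn : q ^ n ≠ 0 := pow_ne_zero _ hq
      field_simp
      ring
    rw [hzp, h1, hcoef, sub_mul, smul_mul_assoc,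
      show algebraMap ℂ A (2 * ((q⁻¹) ^ n - 1) / (q - 1)) * f ^ n
        = (2 * ((q⁻¹) ^ n - 1) / (q - 1)) • f ^ n from (Algebra.smul_def _ _).symm]
    module
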